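/- Let α and β be types and φ : α → β a function. Let js = [j₁, …, j_k] be a list over β and B = [B₁, …, B_k] a list of lists over α of the same length k such that for every index q: every element a of B_q satisfies φ(a) = j_q, and conversely every a ∈ α with φ(a) = j_q occurs in B_q. Let l = [i₁, …, i_ℓ] be a list over α such that φ(i_p) ≠ φ(i_{p+1}) for all consecutive pairs. Then l is a sublist (subsequence) of the concatenation B₁ ++ ⋯ ++ B_k if and only if the list [φ(i₁), …, φ(i_ℓ)] is a sublist of js. -/

import Mathlib

/-- Backward direction: if the image word is a sublist of `js`,
then `l` is a sublist of the concatenation of the blocks. -/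
theorem aux_back {α β : Type*} (φ : α → β) :
    ∀ (js : List β) (B : List (List α)) (hlen : B.length = js.length)
    (_hmem : ∀ (q : ℕ) (hq : q < B.length) (a : α),
      a ∈ B[q] ↔ φ a = js[q]'(hlen ▸ hq))
    (l : List α), (l.map φ).Sublist js → l.Sublist B.flatten := by
  intro js
  induction js with
  | nil =>
    intro B hlen hmem l h
    have : l.map φ = [] := List.sublist_nil.mp h
    simp [List.map_eq_nil_iff.mp this]
  | cons j js' ih =>
    intro B hlen hmem l h
    cases B with
    | nil => simp at hlen
    | cons Bq B' =>
      have hlen' : B'.length = js'.length := by simpa using hlen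
      have hmem' : ∀ (q : ℕ) (hq : q < B'.length) (a : α),
          a ∈ B'[q] ↔ φ a = js'[q]'(hlen' ▸ hq) := by
        intro q hq a
        have := hmem (q + 1) (by simpa using Nat.succ_lt_succ hq) a
        simpa using this
      cases l with
      | nil => simp
      | cons a l' =>
        simp only [List.map_cons] at h
        cases h with
        | cons _ h' =>
          have := ih B' hlen' hmem' (a :: l') (by simpa using h')
          rw [List.flatten_cons]
          exact this.trans (List.sublist_append_right Bq B'.flatten)
        | cons_cons _ h' =>
          have ha : a ∈ Bq := by
            have := hmem 0 (by simp) a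
            simpa using this
          have hl' := ih B' hlen' hmem' l' h'
          rw [List.flatten_cons]
          have : ([a] ++ l').Sublist (Bq ++ B'.flatten) :=
            List.Sublist.append (List.singleton_sublist.mpr ha) hl'
          simpa using this

/-- Forward direction core: a word with distinct consecutive letters that is a
sublist of a concatenation of constant blocks is a sublist of the block values. -/
theorem aux_fwd {β : Type*} :
    ∀ (js : List β) (C : List (List β)) (_hlen : C.length = js.length)
    (_hmem : ∀ (q : ℕ) (hq : q < C.length) (b : β),
      b ∈ C[q] → b = js[q]'(_hlen ▸ hq))
    (c : List β), c.Chain' (· ≠ ·) → c.Sublist C.flatten → c.Sublist js := by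
  intro js
  induction js with
  | nil =>
    intro C hlen hmem c _ h
    cases C with
    | nil => simpa using h
    | cons _ _ => simp at hlen
  | cons j js' ih =>
    intro C hlen hmem c hchain h
    cases C with
    | nil => simp at hlen
    | cons Cq C' =>
      have hlen' : C'.length = js'.length := by simpa using hlen
      have hmem' : ∀ (q : ℕ) (hq : q < C'.length) (b : β),
          b ∈ C'[q] → b = js'[q]'(hlen' ▸ hq) := by
        intro q hq b hb
        have := hmem (q + 1) (by simpa using Nat.succ_lt_succ hq) b
        simpa using this hb
      rw [List.flatten_cons, List.sublist_append_iff] at h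
      obtain ⟨c₁, c₂, rfl, h₁, h₂⟩ := h
      have hc₁ : ∀ b ∈ c₁, b = j := by
        intro b hb
        have := hmem 0 (by simp) b
        simpa using this (h₁.mem hb)
      match c₁, hc₁ with
      | [], _ =>
        simp only [List.nil_append] at hchain ⊢
        exact (ih C' hlen' hmem' c₂ hchain h₂).cons j
      | [b], hc₁ =>
        have hb : b = j := hc₁ b (by simp)
        subst hb
        simp only [List.singleton_append] at hchain ⊢
        exact (ih C' hlen' hmem' c₂ hchain.tail h₂).cons₂ b
      | b₁ :: b₂ :: t, hc₁ =>
        exfalso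
        have h1 : b₁ = j := hc₁ b₁ (by simp)
        have h2 : b₂ = j := hc₁ b₂ (by simp)
        have := hchain.rel_head
        simp [h1, h2] at this

theorem stmt_7 {α β : Type*} (φ : α → β) (js : List β) (B : List (List α))
    (hlen : B.length = js.length)
    (hmem : ∀ (q : ℕ) (hq : q < B.length) (a : α),
      a ∈ B[q] ↔ φ a = js[q]'(hlen ▸ hq))
    (l : List α) (hchain : l.Chain' fun x y => φ x ≠ φ y) :
    l.Sublist B.flatten ↔ (l.map φ).Sublist js := by
  constructor
  · intro h
    have hmap : (l.map φ).Sublist (B.flatten.map φ) := h.map φ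
    rw [List.map_flatten] at hmap
    refine aux_fwd js (B.map (List.map φ)) (by simpa using hlen) ?_ (l.map φ)
      ((List.isChain_map φ).mpr hchain) hmap
    intro q hq b hb
    simp only [List.length_map] at hq
    simp only [List.getElem_map, List.mem_map] at hb
    obtain ⟨a, ha, rfl⟩ := hb
    simpa using (hmem q hq a).mp ha
  · exact aux_back φ js B hlen hmem l
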